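/- Let A be an m × n matrix over a finite field F_q and let A' be an m' × n' matrix obtained from A by adding columns and rows, in block form A' = [[A, 0], [A'', A''']], with A'' of size (m'-m) × n and A''' of size (m'-m) × (n'-n). Then nullity(A') - nullity(A) = log_q of the sum over pairs (σ, τ), where τ ∈ F_q^I ranges over assignments to the set I of columns of A where A'' has a nonzero entry and σ ∈ F_q^{J} ranges over assignments to the new columns J = {n+1,...,n'}, of μ_{A,I}(τ) times the product over h ∈ [m'-m] of the indicator that Σ_{i∈I} A''_{h,i} τ_i + Σ_{j∈J} A'''_{h,j-n} σ_j = 0, where μ_{A,I} denotes the marginal on coordinates I of the uniform distribution on ker(A). -/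

import Mathlib

open scoped BigOperators

/-- The nullity of a matrix over a field: dimension of its kernel. -/
noncomputable def nullity {F : Type*} [Field F] {α β : Type*} [Fintype α] [Fintype β]
    (A : Matrix α β F) : ℕ :=
  Module.finrank F (LinearMap.ker A.mulVecLin)

lemma card_ker_eq {F : Type} [Field F] [Fintype F] [DecidableEq F] {α β : Type}
    [Fintype α] [Fintype β] [DecidableEq β] (A : Matrix α β F) :
    Fintype.card {v : β → F // A.mulVec v = 0} = Fintype.card F ^ nullity A := by
  have e : {v : β → F // A.mulVec v = 0} ≃ LinearMap.ker A.mulVecLin :=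
    Equiv.subtypeEquivRight (fun v => by
      simp [LinearMap.mem_ker, Matrix.mulVecLin_apply])
  haveI : Fintype (LinearMap.ker A.mulVecLin) := Fintype.ofEquiv _ e
  rw [Fintype.card_congr e, Module.card_eq_pow_finrank (K := F)]
  rfl

lemma sum_card_mul {F : Type} [Field F] [Fintype F] [DecidableEq F]
    {m n : ℕ} (A : Matrix (Fin m) (Fin n) F) (I : Finset (Fin n))
    (f : (I → F) → ℝ) :
    ∑ τ : I → F,
      (Fintype.card {v : Fin n → F // A.mulVec v = 0 ∧ ∀ i : I, v i = τ i} : ℝ) * f τ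
      = ∑ v : Fin n → F, if A.mulVec v = 0 then f (fun i => v i) else 0 := by
  classical
  have hcard : ∀ τ : I → F,
      (Fintype.card {v : Fin n → F // A.mulVec v = 0 ∧ ∀ i : I, v i = τ i} : ℝ)
      = ∑ v : Fin n → F, if A.mulVec v = 0 ∧ ∀ i : I, v i = τ i then (1:ℝ) else 0 := by
    intro τ
    rw [Fintype.card_subtype, Finset.card_filter]
    push_cast
    rfl
  simp_rw [hcard, Finset.sum_mul]
  rw [Finset.sum_comm]
  refine Finset.sum_congr rfl fun v _ => ?_
  by_cases hv : A.mulVec v = 0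
  · simp only [hv, true_and, ite_mul, one_mul, zero_mul, if_pos]
    have h2 : ∀ τ : I → F, (∀ i : I, v i = τ i) ↔ (fun i : I => v i) = τ := by
      intro τ; rw [funext_iff]
    simp_rw [h2]
    simp
  · simp [hv]

/-- Fact 2.1: change of nullity upon adding rows and columns, expressed via the
Boltzmann marginal `μ_{A,I}` on the set `I` of columns where `A''` has a nonzero entry. -/
theorem stmt_1 {F : Type} [Field F] [Fintype F] [DecidableEq F]
    (m n m₂ n₂ : ℕ) (q : ℕ) (hq : q = Fintype.card F)
    (A : Matrix (Fin m) (Fin n) F)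
    (A'' : Matrix (Fin m₂) (Fin n) F)
    (A''' : Matrix (Fin m₂) (Fin n₂) F)
    (A' : Matrix (Fin m ⊕ Fin m₂) (Fin n ⊕ Fin n₂) F)
    (hA' : A' = Matrix.fromBlocks A 0 A'' A''')
    (I : Finset (Fin n)) (hI : ∀ i, i ∈ I ↔ ∃ h, A'' h i ≠ 0)
    (μ : (I → F) → ℝ)
    (hμ : ∀ τ : I → F, μ τ =
      (Fintype.card {v : Fin n → F // A.mulVec v = 0 ∧ ∀ i : I, v i = τ i} : ℝ)
        / (q : ℝ) ^ nullity A) :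
    (nullity A' : ℝ) - (nullity A : ℝ) =
      Real.logb q
        (∑ σ : Fin n₂ → F, ∑ τ : I → F, μ τ *
          ∏ h : Fin m₂,
            (if (∑ i : I, A'' h i * τ i) + (∑ j : Fin n₂, A''' h j * σ j) = 0
              then (1:ℝ) else 0)) := by
  classical
  have hq1 : (1:ℝ) < q := by
    rw [hq]; exact_mod_cast Fintype.one_lt_card
  have hq0 : (0:ℝ) < q := lt_trans one_pos hq1
  have hzero : ∀ (h : Fin m₂) (i : Fin n), i ∉ I → A'' h i = 0 := by
    intro h i hi
    by_contra hne
    exact hi ((hI i).mpr ⟨h, hne⟩)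
  have hsumI : ∀ (v : Fin n → F) (h : Fin m₂),
      (∑ i : I, A'' h i * v i) = A''.mulVec v h := by
    intro v h
    rw [Finset.sum_coe_sort I (fun i => A'' h i * v i)]
    rw [Matrix.mulVec, dotProduct]
    exact Finset.sum_subset (Finset.subset_univ I)
      (fun i _ hi => by rw [hzero h i hi, zero_mul])
  have hpoint : ∀ (v : Fin n → F) (σ : Fin n₂ → F),
      (A'.mulVec (Sum.elim v σ) = 0) ↔
        (A.mulVec v = 0 ∧ A''.mulVec v + A'''.mulVec σ = 0) := by
    intro v σ
    rw [hA', Matrix.fromBlocks_mulVec, Matrix.zero_mulVec, add_zero]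
    constructor
    · intro h
      constructor
      · funext i; simpa using congrFun h (Sum.inl i)
      · funext j; simpa using congrFun h (Sum.inr j)
    · rintro ⟨h1, h2⟩
      funext x
      cases x with
      | inl i => simpa using congrFun h1 i
      | inr j => simpa using congrFun h2 j
  have key : ∀ σ : Fin n₂ → F,
      (∑ τ : I → F, μ τ *
          ∏ h : Fin m₂,
            (if (∑ i : I, A'' h i * τ i) + (∑ j : Fin n₂, A''' h j * σ j) = 0
              then (1:ℝ) else 0))
      = (∑ v : Fin n → F,
          if A.mulVec v = 0 ∧ A''.mulVec v + A'''.mulVec σ = 0 then (1:ℝ) else 0)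
          / (q : ℝ) ^ nullity A := by
    intro σ
    have hnum : (∑ τ : I → F,
        (Fintype.card {v : Fin n → F // A.mulVec v = 0 ∧ ∀ i : I, v i = τ i} : ℝ) *
          ∏ h : Fin m₂,
            (if (∑ i : I, A'' h i * τ i) + (∑ j : Fin n₂, A''' h j * σ j) = 0
              then (1:ℝ) else 0))
        = ∑ v : Fin n → F,
            if A.mulVec v = 0 ∧ A''.mulVec v + A'''.mulVec σ = 0 then (1:ℝ) else 0 := by
      rw [sum_card_mul A I (fun τ => ∏ h : Fin m₂,
        (if (∑ i : I, A'' h i * τ i) + (∑ j : Fin n₂, A''' h j * σ j) = 0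
          then (1:ℝ) else 0))]
      refine Finset.sum_congr rfl fun v _ => ?_
      by_cases hv : A.mulVec v = 0
      · simp only [hv, true_and, if_pos]
        simp_rw [hsumI v]
        rw [Finset.prod_boole]
        congr 1
        simp only [eq_iff_iff]
        constructor
        · intro hall
          funext h
          simpa [Matrix.mulVec, dotProduct] using hall h (Finset.mem_univ h)
        · intro heq h _
          simpa [Matrix.mulVec, dotProduct] using congrFun heq h
      · simp [hv]
    simp_rw [hμ, div_mul_eq_mul_div]
    rw [← Finset.sum_div, hnum]
  have hcount :
      (∑ σ : Fin n₂ → F, ∑ v : Fin n → F,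
          if A.mulVec v = 0 ∧ A''.mulVec v + A'''.mulVec σ = 0 then (1:ℝ) else 0)
      = (Fintype.card {w : Fin n ⊕ Fin n₂ → F // A'.mulVec w = 0} : ℝ) := by
    rw [Fintype.card_subtype, Finset.card_filter]
    push_cast
    rw [← Fintype.sum_prod_type']
    refine Fintype.sum_equiv
      ((Equiv.prodComm _ _).trans (Equiv.sumArrowEquivProdArrow (Fin n) (Fin n₂) F).symm)
      _ _ ?_
    intro p
    have he : ((Equiv.prodComm (Fin n₂ → F) (Fin n → F)).trans
        (Equiv.sumArrowEquivProdArrow (Fin n) (Fin n₂) F).symm) p = Sum.elim p.2 p.1 := rfl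
    rw [he]
    congr 1
    simp only [eq_iff_iff]
    exact (hpoint p.2 p.1).symm
  have cardA' : (Fintype.card {w : Fin n ⊕ Fin n₂ → F // A'.mulVec w = 0} : ℝ)
      = (q:ℝ) ^ nullity A' := by
    rw [card_ker_eq A', hq]; push_cast; ring
  have hS : (∑ σ : Fin n₂ → F, ∑ τ : I → F, μ τ *
          ∏ h : Fin m₂,
            (if (∑ i : I, A'' h i * τ i) + (∑ j : Fin n₂, A''' h j * σ j) = 0
              then (1:ℝ) else 0))
      = (q:ℝ) ^ nullity A' / (q:ℝ) ^ nullity A := by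
    simp_rw [key]
    rw [← Finset.sum_div, hcount, cardA']
  rw [hS, Real.logb_div (by positivity) (by positivity),
    Real.logb_pow, Real.logb_pow, Real.logb_self_eq_one hq1]
  ring
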